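/- arXiv:2305.07298 — 2 statements merged into one kernel-verified Lean document; each statement's English description precedes it below -/
import Mathlib

section
/- Suppose Ψ : ℝ → ℝ satisfies (x − y)(Ψ(x) − Ψ(y)) ≤ l_Ψ (x − y)² for all x, y, and φ : ℝ → ℝ is differentiable with 1 ≤ φ'(z) ≤ H for all z (so φ is strictly increasing). Define L_Ψ = l_Ψ/H if l_Ψ < 0 and L_Ψ = l_Ψ otherwise. Then for all x ≠ y, ((φ(x) − φ(y))/(x − y)) · (x − y)(Ψ(x) − Ψ(y)) ≤ L_Ψ (φ(x) − φ(y))². -/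
/-- Monotonicity transfer: if `Ψ` is one-sided Lipschitz with constant `l_Ψ` and `φ` is
differentiable with `1 ≤ φ' ≤ H`, then for `L_Ψ = l_Ψ/H` (if `l_Ψ < 0`) or `l_Ψ` (otherwise),
`((φ(x)−φ(y))/(x−y)) (x−y)(Ψ(x)−Ψ(y)) ≤ L_Ψ (φ(x)−φ(y))²` for all `x ≠ y`. -/
theorem stmt_13 (Ψ φ : ℝ → ℝ) (lΨ H : ℝ)
    (hΨ : ∀ x y : ℝ, (x - y) * (Ψ x - Ψ y) ≤ lΨ * (x - y) ^ 2)
    (hφ : Differentiable ℝ φ)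
    (hφ' : ∀ z : ℝ, 1 ≤ deriv φ z ∧ deriv φ z ≤ H) :
    ∀ x y : ℝ, x ≠ y →
      (φ x - φ y) / (x - y) * ((x - y) * (Ψ x - Ψ y)) ≤
        (if lΨ < 0 then lΨ / H else lΨ) * (φ x - φ y) ^ 2 := by
  have hH : (1 : ℝ) ≤ H := le_trans (hφ' 0).1 (hφ' 0).2
  have hH0 : (0 : ℝ) < H := lt_of_lt_of_le one_pos hH
  -- slope bounds: for all x ≠ y, 1 ≤ slope ≤ H
  have key : ∀ x y : ℝ, x ≠ y →
      1 ≤ (φ x - φ y) / (x - y) ∧ (φ x - φ y) / (x - y) ≤ H := by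
    have main : ∀ a b : ℝ, a < b →
        1 ≤ (φ b - φ a) / (b - a) ∧ (φ b - φ a) / (b - a) ≤ H := by
      intro a b hab
      obtain ⟨c, _, hc⟩ := exists_hasDerivAt_eq_slope φ (deriv φ) hab
        (hφ.continuous.continuousOn) (fun z _ => (hφ.differentiableAt).hasDerivAt)
      rw [← hc]
      exact hφ' c
    intro x y hxy
    rcases lt_or_gt_of_ne hxy with h | h
    · have := main x y h
      have heq : (φ x - φ y) / (x - y) = (φ y - φ x) / (y - x) := by
        rw [div_eq_div_iff (by linarith) (by linarith)]; ring
      rw [heq]; exact this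
    · exact main y x h
  intro x y hxy
  obtain ⟨h1, h2⟩ := key x y hxy
  set r := (φ x - φ y) / (x - y) with hr
  have hd : x - y ≠ 0 := sub_ne_zero.mpr hxy
  have hφeq : φ x - φ y = r * (x - y) := by rw [hr]; field_simp
  have hr0 : 0 < r := lt_of_lt_of_le one_pos h1
  have step1 : r * ((x - y) * (Ψ x - Ψ y)) ≤ r * (lΨ * (x - y) ^ 2) :=
    mul_le_mul_of_nonneg_left (hΨ x y) hr0.le
  refine le_trans step1 ?_
  rw [hφeq]
  have hd2 : 0 ≤ (x - y) ^ 2 := sq_nonneg _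
  have : r * (lΨ * (x - y) ^ 2) = (lΨ * r) * (x - y) ^ 2 := by ring
  rw [this, mul_pow, show (if lΨ < 0 then lΨ / H else lΨ) * (r ^ 2 * (x - y) ^ 2)
    = ((if lΨ < 0 then lΨ / H else lΨ) * r ^ 2) * (x - y) ^ 2 by ring]
  apply mul_le_mul_of_nonneg_right _ hd2
  split_ifs with hneg
  · -- lΨ < 0 : need lΨ * r ≤ lΨ/H * r²
    rw [div_mul_eq_mul_div, le_div_iff₀ hH0]
    nlinarith [mul_nonneg (mul_nonneg (neg_nonneg.mpr hneg.le) hr0.le) (sub_nonneg.mpr h2)]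
  · push_neg at hneg
    nlinarith [mul_nonneg (mul_nonneg hneg hr0.le) (sub_nonneg.mpr h1)]
end

section
/- Let b, σ : ℝ → ℝ with σ continuous and nonvanishing, and suppose φ on [ξ_{k+1}, ∞) is defined by φ(y) = φ(ξ_{k+1}) + ∫_{ξ_{k+1}}^y (1 + (φ'(ξ_{k+1}) − 1) exp(−∫_{ξ_{k+1}}^x 2b(s)/σ²(s) ds)) dx with φ'(ξ_{k+1}) ≥ 1. If b(y) ≥ 0 for all y > ξ_{k+1}, then 1 ≤ φ'(y) ≤ φ'(ξ_{k+1}) for all y ≥ ξ_{k+1}, and at every continuity point x > ξ_{k+1} of b, φ satisfies φ'(x) b(x) + (1/2) φ''(x) σ²(x) = b(x). -/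
open intervalIntegral MeasureTheory

/-- The extension of the control-drift function beyond `ξ` (case (P_b1): `b ≥ 0` to the right):
`φ(y) = φ(ξ) + ∫_ξ^y (1 + (d−1) exp(−∫_ξ^x 2b/σ²))` with `d = φ'(ξ) ≥ 1` satisfies
`1 ≤ φ' ≤ d` on `[ξ, ∞)` and `φ' b + (1/2) φ'' σ² = b` at continuity points of `b` beyond `ξ`. -/
theorem stmt_15 (b σ φ : ℝ → ℝ) (ξ φξ d : ℝ)
    (hσc : Continuous σ) (hσ0 : ∀ x, σ x ≠ 0) (hd : 1 ≤ d)
    (hbpos : ∀ y, ξ < y → 0 ≤ b y)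
    (hint : ∀ y, IntervalIntegrable (fun s => 2 * b s / (σ s) ^ 2) volume ξ y)
    (hφ : ∀ y, φ y = φξ + ∫ x in ξ..y,
      (1 + (d - 1) * Real.exp (-∫ s in ξ..x, 2 * b s / (σ s) ^ 2))) :
    (∀ y, ξ ≤ y → 1 ≤ deriv φ y ∧ deriv φ y ≤ d) ∧
    (∀ x, ξ < x → ContinuousAt b x →
      deriv φ x * b x + 1/2 * deriv (deriv φ) x * (σ x) ^ 2 = b x) := by
  set I : ℝ → ℝ := fun x => ∫ s in ξ..x, 2 * b s / (σ s) ^ 2 with hIdef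
  have hint' : ∀ a c, IntervalIntegrable (fun s => 2 * b s / (σ s) ^ 2) volume a c :=
    fun a c => (hint a).symm.trans (hint c)
  have hIcont : Continuous I := intervalIntegral.continuous_primitive hint' ξ
  set g : ℝ → ℝ := fun x => 1 + (d - 1) * Real.exp (-I x) with hgdef
  have hgcont : Continuous g := by
    apply continuous_const.add
    exact continuous_const.mul (hIcont.neg.rexp)
  have hφeq : φ = fun u => φξ + ∫ x in ξ..u, g x := funext hφ
  have hφg : ∀ y, HasDerivAt φ (g y) y := by
    intro y
    rw [hφeq]
    have h1 := intervalIntegral.integral_hasDerivAt_right (hgcont.intervalIntegrable ξ y)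
      (hgcont.stronglyMeasurableAtFilter volume (nhds y)) hgcont.continuousAt
    simpa using h1.const_add φξ
  have hderiv : deriv φ = g := funext fun y => (hφg y).deriv
  constructor
  · intro y hy
    rw [hderiv]
    have hE : 0 < Real.exp (-I y) := Real.exp_pos _
    have hI0 : 0 ≤ I y := by
      apply intervalIntegral.integral_nonneg_of_ae_restrict hy
      have hnull : (volume.restrict (Set.Icc ξ y)) {ξ} = 0 := by
        simp [Real.volume_singleton, Measure.restrict_apply' measurableSet_Icc]
        exact measure_mono_null (Set.inter_subset_left) Real.volume_singleton
      filter_upwards [ae_restrict_mem measurableSet_Icc,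
        measure_eq_zero_iff_ae_notMem.mp hnull] with s hs hsne
      have hlt : ξ < s := lt_of_le_of_ne hs.1 (by simpa [eq_comm] using hsne)
      have := hbpos s hlt
      positivity
    have hE1 : Real.exp (-I y) ≤ 1 := Real.exp_le_one_iff.mpr (by linarith)
    constructor
    · simp only [hgdef]
      nlinarith
    · simp only [hgdef]
      nlinarith
  · intro x hx hbx
    have hs2 : (σ x) ^ 2 ≠ 0 := pow_ne_zero 2 (hσ0 x)
    have hcx : ContinuousAt (fun s => 2 * b s / (σ s) ^ 2) x :=
      (continuousAt_const.mul hbx).div ((hσc.continuousAt).pow 2) hs2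
    have hmeas : StronglyMeasurableAtFilter (fun s => 2 * b s / (σ s) ^ 2) (nhds x) volume := by
      refine ⟨Set.Ioo ξ (x + 1), Ioo_mem_nhds hx (by linarith), ?_⟩
      exact (hint (x + 1)).1.aestronglyMeasurable.mono_measure
        (Measure.restrict_mono Set.Ioo_subset_Ioc_self le_rfl)
    have hIx : HasDerivAt I (2 * b x / (σ x) ^ 2) x :=
      intervalIntegral.integral_hasDerivAt_right (hint x) hmeas hcx
    have hgx : HasDerivAt g ((d - 1) * (Real.exp (-I x) * -(2 * b x / (σ x) ^ 2))) x := by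
      have := ((hIx.neg).exp.const_mul (d - 1)).const_add 1
      simpa [hgdef] using this
    rw [hderiv, hgx.deriv]
    simp only [hgdef]
    field_simp [hσ0 x]
    ring
end
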